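/- Let λ - μ = β₁ + ... + β_k with βᵢ positive roots and k minimal, and suppose ⟨α∨, μ⟩ ≥ -1 for all positive roots α. Setting μᵢ := λ - β₁ - ... - βᵢ, one has ⟨βⱼ∨, μᵢ⟩ ≥ -1 for all j ≤ i. -/
import Mathlib


/-!
STATEMENT 6: Let `λ - μ = β₀ + ... + β_{k-1}` with the `βᵢ` positive roots and `k` minimal,
and suppose `⟨α∨, μ⟩ ≥ -1` for all positive roots `α` (and `λ` dominant).  Setting
`μᵢ := λ - β₀ - ... - β_{i-1}`, one has `⟨βⱼ∨, μᵢ⟩ ≥ -1` for all `j < i` (0-indexed, this is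
the paper's `j ≤ i` with 1-indexing).  The hypothesis `hkey` is the key root-system fact:
if `⟨a∨, b⟩ < 0` for positive roots `a, b`, then `a + b` is a (positive) root.
-/
theorem slices_intermediate_pairings_ge_neg_one
    {V : Type*} [AddCommGroup V] [Module ℝ V]
    (Δpos : Finset V)
    (coroot : V → Module.Dual ℝ V)
    (hcoroot_self : ∀ α ∈ Δpos, coroot α α = 2)
    (hkey : ∀ a ∈ Δpos, ∀ b ∈ Δpos, coroot a b < 0 → a + b ∈ Δpos)
    (lam mu : V)
    (hlam_dom : ∀ α ∈ Δpos, 0 ≤ coroot α lam)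
    (hmu : ∀ α ∈ Δpos, -1 ≤ coroot α mu)
    (k : ℕ) (β : ℕ → V)
    (hβ : ∀ i < k, β i ∈ Δpos)
    (hdecomp : lam - mu = ∑ i ∈ Finset.range k, β i)
    -- minimality of k
    (hmin : ∀ (m : ℕ) (γ : ℕ → V), (∀ i < m, γ i ∈ Δpos) →
        lam - mu = ∑ i ∈ Finset.range m, γ i → k ≤ m) :
    ∀ i ≤ k, ∀ j < i, -1 ≤ coroot (β j) (lam - ∑ t ∈ Finset.range i, β t) := by
  intro i hik j hji
  by_contra h
  push_neg at h
  have hjk : j < k := lt_of_lt_of_le hji hik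
  have hβj : β j ∈ Δpos := hβ j hjk
  -- rewrite lam - ∑ range i = mu + ∑ Ico i k
  have hsplit : ∑ s ∈ Finset.range k, β s
      = ∑ s ∈ Finset.range i, β s + ∑ s ∈ Finset.Ico i k, β s :=
    (Finset.sum_range_add_sum_Ico β hik).symm
  have hd2 : lam - ∑ s ∈ Finset.range i, β s
      = mu + ∑ s ∈ Finset.Ico i k, β s := by
    have h2 : lam = (∑ s ∈ Finset.range i, β s + ∑ s ∈ Finset.Ico i k, β s) + mu := by
      rw [← hsplit]; exact sub_eq_iff_eq_add.mp hdecomp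
    rw [h2]; abel
  obtain ⟨t, ht, htneg⟩ : ∃ t ∈ Finset.Ico i k, coroot (β j) (β t) < 0 := by
    by_contra hc
    push_neg at hc
    have hsum : (0:ℝ) ≤ ∑ t ∈ Finset.Ico i k, coroot (β j) (β t) :=
      Finset.sum_nonneg hc
    have hval : coroot (β j) (lam - ∑ s ∈ Finset.range i, β s)
        = coroot (β j) mu + ∑ t ∈ Finset.Ico i k, coroot (β j) (β t) := by
      rw [hd2, map_add, map_sum]
    have := hmu (β j) hβj
    linarith [h, this, hsum, hval.ge, hval.le]
  obtain ⟨hit, htk⟩ := Finset.mem_Ico.mp ht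
  have hjt : j < t := lt_of_lt_of_le hji hit
  have hβt : β t ∈ Δpos := hβ t htk
  have hnew : β j + β t ∈ Δpos := hkey (β j) hβj (β t) hβt htneg
  set γ : ℕ → V := fun s => if s = j then β j + β t else if s < t then β s else β (s+1) with hγ
  have hmem : ∀ s < k - 1, γ s ∈ Δpos := by
    intro s hs
    by_cases h1 : s = j
    · simp [hγ, h1, hnew]
    · by_cases h2 : s < t
      · simpa [hγ, h1, h2] using hβ s (lt_trans h2 htk)
      · simpa [hγ, h1, h2] using hβ (s+1) (by omega)
  have hA : ∑ s ∈ Finset.range t, γ s = (∑ s ∈ Finset.range t, β s) + β t := by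
    have : ∀ s ∈ Finset.range t, γ s = β s + (if s = j then β t else 0) := by
      intro s hs
      rw [Finset.mem_range] at hs
      by_cases h1 : s = j
      · simp [hγ, h1, hjt]
      · simp [hγ, h1, hs]
    rw [Finset.sum_congr rfl this, Finset.sum_add_distrib,
      Finset.sum_ite_eq' (Finset.range t) j (fun _ => β t)]
    simp [Finset.mem_range.mpr hjt]
  have hB : ∑ s ∈ Finset.Ico t (k-1), γ s = ∑ s ∈ Finset.Ico (t+1) k, β s := by
    rw [Finset.sum_Ico_eq_sum_range, Finset.sum_Ico_eq_sum_range]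
    have hn : k - 1 - t = k - (t + 1) := by omega
    rw [hn]
    apply Finset.sum_congr rfl
    intro x hx
    have h1 : ¬ (t + x = j) := by omega
    have h2 : ¬ (t + x < t) := by omega
    simp only [hγ, h1, h2, if_false]
    congr 1
    omega
  have hsumγ : ∑ s ∈ Finset.range (k-1), γ s = ∑ s ∈ Finset.range k, β s := by
    have ht1 : t ≤ k - 1 := by omega
    rw [← Finset.sum_range_add_sum_Ico γ ht1, hA, hB,
      ← Finset.sum_range_add_sum_Ico β (le_of_lt htk),
      Finset.sum_eq_sum_Ico_succ_bot htk]
    abel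
  have := hmin (k-1) γ hmem (by rw [hsumγ]; exact hdecomp)
  omega
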